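/- arXiv:2402.17852 — 2 statements merged into one kernel-verified Lean document; each statement's English description precedes it below -/
import Mathlib

section
/- Let $A$ be a commutative ring, $M_0$ an $A$-module, $\lambda > 1$ a real number, and define $F : M_0((t^{\mathbb{R}})) \to M_0((t^{\mathbb{R}}))$ by $F(\sum m_i t^{d_i}) = \sum m_i t^{\lambda d_i}$. Suppose $S \subseteq M_0((t^{\mathbb{R}}))$ is an $A$-submodule that is closed in the $t$-adic topology, stable under $F$, and stable under multiplication by $t^d$ for every $d \in \mathbb{R}$. Then there exists an $A$-submodule $S_0 \subseteq M_0$ such that $S = S_0((t^{\mathbb{R}}))$. -/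
/-- A subset of `ℝ` is *left-finite* if it meets every interval `(-∞, C)` in a finite set. -/
def LeftFinite (s : Set ℝ) : Prop := ∀ C : ℝ, (s ∩ Set.Iio C).Finite

/-- The monomial `m · t^e` as a coefficient function. -/
noncomputable def sgAux {M₀ : Type*} [Zero M₀] (e : ℝ) (m : M₀) : ℝ → M₀ := fun d => if d = e then m else 0

/-- Elements of the Novikov module `M₀((t^ℝ))` are modeled as coefficient functions
`ℝ → M₀` with left-finite support.  Let `λ > 1` and `F` the exponent rescaling
`F(∑ mᵢ t^{dᵢ}) = ∑ mᵢ t^{λ dᵢ}`, i.e. `(F s) d = s (d / λ)`.  If `S` is an `A`-submodule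
of `M₀((t^ℝ))` that is closed in the `t`-adic topology, stable under `F`, and stable under
multiplication by `tᵈ` for every real `d` (i.e. under `s ↦ (d ↦ s (d - e))`), then
`S = S₀((t^ℝ))` for an `A`-submodule `S₀ ⊆ M₀`, i.e. membership in `S` is equivalent to
left-finiteness of the support together with all coefficients lying in `S₀`. -/
theorem frobenius_stable_closed_submodule (A : Type*) [CommRing A]
    (M₀ : Type*) [AddCommGroup M₀] [Module A M₀] (lam : ℝ) (hlam : 1 < lam)
    (S : Submodule A (ℝ → M₀))
    (helem : ∀ s ∈ S, LeftFinite (Function.support s))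
    (hF : ∀ s ∈ S, (fun d : ℝ => s (d / lam)) ∈ S)
    (ht : ∀ (e : ℝ), ∀ s ∈ S, (fun d : ℝ => s (d - e)) ∈ S)
    (hclosed : ∀ x : ℝ → M₀, LeftFinite (Function.support x) →
      (∀ d : ℝ, ∃ s ∈ S, ∀ e < d, x e = s e) → x ∈ S) :
    ∃ S₀ : Submodule A M₀, ∀ x : ℝ → M₀,
      x ∈ S ↔ (LeftFinite (Function.support x) ∧ ∀ d : ℝ, x d ∈ S₀) := by
  classical
  have hlam0 : (0 : ℝ) < lam := by linarith
  -- the monomial `m · t^e`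
  have lfin_sgAuxAux : ∀ (e : ℝ) (m : M₀), LeftFinite (Function.support (sgAux e m)) := by
    intro e m C
    apply Set.Finite.inter_of_left
    apply Set.Finite.subset (Set.finite_singleton e)
    intro d hd
    simp only [Function.mem_support, sgAux] at hd
    by_contra h
    simp only [Set.mem_singleton_iff] at h
    simp [h] at hd
  have sgAux_shift : ∀ (e : ℝ) (m : M₀), sgAux 0 m ∈ S → sgAux e m ∈ S := by
    intro e m h
    have h2 := ht e _ h
    have : (fun d : ℝ => sgAux 0 m (d - e)) = sgAux e m := by
      funext d
      simp only [sgAux, sub_eq_zero]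
    rwa [this] at h2
  -- extraction of the lowest coefficient when the support is contained in `[0, ∞)`
  have low : ∀ s ∈ S, (∀ e < (0 : ℝ), s e = 0) → sgAux 0 (s 0) ∈ S := by
    intro s hs hneg
    apply hclosed _ (lfin_sgAuxAux 0 (s 0))
    intro d
    by_cases hT : (Function.support s ∩ Set.Ioo 0 d).Nonempty
    · have hTfin : (Function.support s ∩ Set.Ioo 0 d).Finite := by
        apply Set.Finite.subset (helem s hs d)
        intro x hx
        exact ⟨hx.1, hx.2.2⟩
      have hTne : hTfin.toFinset.Nonempty := by
        rwa [Set.Finite.toFinset_nonempty]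
      set δ := hTfin.toFinset.min' hTne with hδdef
      have hδmem : δ ∈ Function.support s ∩ Set.Ioo 0 d := by
        have := hTfin.toFinset.min'_mem hTne
        rwa [Set.Finite.mem_toFinset] at this
      have hδpos : 0 < δ := hδmem.2.1
      obtain ⟨k, hk⟩ := pow_unbounded_of_one_lt (d / δ) hlam
      have hlk : (0 : ℝ) < lam ^ k := pow_pos hlam0 k
      have hlk1 : (1 : ℝ) ≤ lam ^ k := one_le_pow₀ (le_of_lt hlam)
      refine ⟨fun e => s (e / lam ^ k), ?_, ?_⟩
      · clear hk
        induction k with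
        | zero => simpa using hs
        | succ k ih =>
          have hlk' : (0 : ℝ) < lam ^ k := pow_pos hlam0 k
          have ih' := ih hlk' (one_le_pow₀ (le_of_lt hlam))
          have h2 := hF _ ih'
          have heq : (fun d : ℝ => s (d / lam / lam ^ k)) =
              (fun e : ℝ => s (e / lam ^ (k + 1))) := by
            funext e
            rw [div_div, ← pow_succ']
          rwa [heq] at h2
      · intro e he
        simp only [sgAux]
        by_cases he0 : e = 0
        · simp [he0]
        · rw [if_neg he0]
          rcases lt_or_gt_of_ne he0 with hlt | hgt
          · have : e / lam ^ k < 0 := div_neg_of_neg_of_pos hlt hlk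
            exact (hneg _ this).symm
          · by_contra hcon
            have hsupp : e / lam ^ k ∈ Function.support s := by
              intro h0
              exact hcon h0.symm
            have h1 : 0 < e / lam ^ k := div_pos hgt hlk
            have h2 : e / lam ^ k ≤ e := by
              rw [div_le_iff₀ hlk]
              nlinarith
            have hmem : e / lam ^ k ∈ hTfin.toFinset := by
              rw [Set.Finite.mem_toFinset]
              exact ⟨hsupp, h1, lt_of_le_of_lt h2 he⟩
            have h3 : δ ≤ e / lam ^ k := hTfin.toFinset.min'_le _ hmem
            have h4 : δ * lam ^ k ≤ e := by
              rw [← le_div_iff₀ hlk]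
              exact h3
            have h5 : d < lam ^ k * δ := (div_lt_iff₀ hδpos).mp hk
            nlinarith
    · refine ⟨s, hs, ?_⟩
      intro e he
      simp only [sgAux]
      by_cases he0 : e = 0
      · simp [he0]
      · rw [if_neg he0]
        rcases lt_or_gt_of_ne he0 with hlt | hgt
        · exact (hneg _ hlt).symm
        · by_contra hcon
          exact hT ⟨e, fun h0 => hcon h0.symm, hgt, he⟩
  -- extraction of the lowest coefficient at an arbitrary `d`
  have base : ∀ s ∈ S, ∀ d : ℝ, (∀ e < d, s e = 0) → sgAux 0 (s d) ∈ S := by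
    intro s hs d hd
    have hu : (fun x : ℝ => s (x + d)) ∈ S := by
      have := ht (-d) s hs
      simpa [sub_neg_eq_add] using this
    have := low _ hu (by
      intro e he
      exact hd _ (by linarith))
    simpa using this
  -- extraction of every coefficient, by induction on the number of smaller support points
  have coeff : ∀ n : ℕ, ∀ s ∈ S, ∀ d : ℝ,
      ∀ hfin : (Function.support s ∩ Set.Iio d).Finite,
      hfin.toFinset.card ≤ n → sgAux 0 (s d) ∈ S := by
    intro n
    induction n with
    | zero =>
      intro s hs d hfin hcard
      apply base s hs d
      intro e he
      by_contra hne
      have : e ∈ hfin.toFinset := by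
        rw [Set.Finite.mem_toFinset]; exact ⟨hne, he⟩
      have := Finset.card_pos.mpr ⟨e, this⟩
      omega
    | succ n ih =>
      intro s hs d hfin hcard
      by_cases hne : hfin.toFinset.Nonempty
      · set d' := hfin.toFinset.min' hne with hd'def
        have hd'mem : d' ∈ Function.support s ∩ Set.Iio d := by
          have := hfin.toFinset.min'_mem hne
          rwa [Set.Finite.mem_toFinset] at this
        have hd'lt : d' < d := hd'mem.2
        -- the coefficient at d' is the lowest one
        have hm' : sgAux 0 (s d') ∈ S := by
          apply base s hs d'
          intro e he
          by_contra hcon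
          have hmem : e ∈ hfin.toFinset := by
            rw [Set.Finite.mem_toFinset]
            exact ⟨hcon, lt_trans he hd'lt⟩
          have := hfin.toFinset.min'_le _ hmem
          rw [← hd'def] at this
          linarith
        have hshift : sgAux d' (s d') ∈ S := sgAux_shift _ _ hm'
        set s' := s - sgAux d' (s d') with hs'def
        have hs' : s' ∈ S := S.sub_mem hs hshift
        have hval : ∀ x : ℝ, s' x = s x - (if x = d' then s d' else 0) := by
          intro x; simp [hs'def, sgAux]
        have hsub : Function.support s' ∩ Set.Iio d ⊆
            (Function.support s ∩ Set.Iio d) \ {d'} := by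
          intro x hx
          have hx1 : s' x ≠ 0 := hx.1
          by_cases hxd' : x = d'
          · exfalso; apply hx1; rw [hval, hxd']; simp
          · refine ⟨⟨?_, hx.2⟩, hxd'⟩
            intro h0
            apply hx1
            rw [hval, h0, if_neg hxd', sub_zero]
        have hfin' : (Function.support s' ∩ Set.Iio d).Finite :=
          Set.Finite.subset hfin.diff hsub
        have hcard' : hfin'.toFinset.card ≤ n := by
          have hsub2 : hfin'.toFinset ⊆ hfin.toFinset.erase d' := by
            intro x hx
            rw [Set.Finite.mem_toFinset] at hx
            have := hsub hx
            rw [Finset.mem_erase, Set.Finite.mem_toFinset]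
            exact ⟨this.2, this.1⟩
          have h1 := Finset.card_le_card hsub2
          have h2 := Finset.card_erase_of_mem (hfin.toFinset.min'_mem hne)
          rw [← hd'def] at h2
          omega
        have := ih s' hs' d hfin' hcard'
        have hs'd : s' d = s d := by
          rw [hval, if_neg (ne_of_gt hd'lt), sub_zero]
        rwa [hs'd] at this
      · apply base s hs d
        intro e he
        by_contra hcon
        exact hne ⟨e, by rw [Set.Finite.mem_toFinset]; exact ⟨hcon, he⟩⟩
  -- the submodule of coefficients
  refine ⟨{ carrier := {m | sgAux 0 m ∈ S}
            zero_mem' := by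
              have : sgAux 0 (0 : M₀) = 0 := by funext d; simp [sgAux]
              simp only [Set.mem_setOf_eq, this]
              exact S.zero_mem
            add_mem' := by
              intro a b ha hb
              simp only [Set.mem_setOf_eq] at *
              have : sgAux 0 (a + b) = sgAux 0 a + sgAux 0 b := by
                funext d; simp only [sgAux, Pi.add_apply]
                split <;> simp
              rw [this]
              exact S.add_mem ha hb
            smul_mem' := by
              intro c a ha
              simp only [Set.mem_setOf_eq] at *
              have : sgAux 0 (c • a) = c • sgAux 0 a := by
                funext d; simp only [sgAux, Pi.smul_apply]
                split <;> simp
              rw [this]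
              exact S.smul_mem c ha }, ?_⟩
  intro x
  constructor
  · intro hx
    refine ⟨helem x hx, ?_⟩
    intro d
    have hfin := helem x hx d
    exact coeff hfin.toFinset.card x hx d hfin le_rfl
  · rintro ⟨hx1, hx2⟩
    apply hclosed x hx1
    intro d
    have hfin := hx1 d
    refine ⟨∑ e ∈ hfin.toFinset, sgAux e (x e), ?_, ?_⟩
    · apply Submodule.sum_mem
      intro e _
      exact sgAux_shift e (x e) (hx2 e)
    · intro e he
      rw [Finset.sum_apply]
      have : ∀ e' ∈ hfin.toFinset, sgAux e' (x e') e = if e = e' then x e' else 0 := by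
        intro e' _; simp [sgAux]
      rw [Finset.sum_congr rfl this, Finset.sum_ite_eq]
      by_cases hmem : e ∈ hfin.toFinset
      · rw [if_pos hmem]
      · rw [if_neg hmem]
        by_contra hcon
        apply hmem
        rw [Set.Finite.mem_toFinset]
        exact ⟨hcon, he⟩
end

section
/- Let $A$ be a commutative ring and $I \subseteq A$ an ideal with $I^2 = 0$. Let $\bar{M}$ be a finite projective $A/I$-module. Then there exists a finite projective $A$-module $M$ together with an isomorphism $M/IM \cong \bar{M}$. -/
universe u

/-- Finite projective modules deform across square-zero thickenings: if `I ⊆ A` is an ideal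
with `I² = 0` and `M̄` is a finite projective `A/I`-module, then there is a finite projective
`A`-module `M` with `M/IM ≅ M̄` (as `A`-modules, `M̄` being an `A`-module via `A → A/I`). -/
theorem deform_finite_projective_square_zero (A : Type u) [CommRing A] (I : Ideal A)
    (hI : I ^ 2 = ⊥)
    (Mbar : Type u) [AddCommGroup Mbar] [Module (A ⧸ I) Mbar]
    [Module.Finite (A ⧸ I) Mbar] [Module.Projective (A ⧸ I) Mbar] :
    letI : Module A Mbar := Module.compHom Mbar (Ideal.Quotient.mk I)
    ∃ M : ModuleCat.{u} A, Module.Finite A M ∧ Module.Projective A M ∧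
      Nonempty ((M ⧸ (I • (⊤ : Submodule A M))) ≃ₗ[A] Mbar) := by
  letI : Module A Mbar := Module.compHom Mbar (Ideal.Quotient.mk I)
  haveI : IsScalarTower A (A ⧸ I) Mbar := by
    constructor
    intro a b m
    obtain ⟨b, rfl⟩ := Ideal.Quotient.mk_surjective b
    show (a • Ideal.Quotient.mk I b) • m = Ideal.Quotient.mk I a • (Ideal.Quotient.mk I b • m)
    rw [← mul_smul, ← map_mul]
    congr 1
  -- present Mbar as a retract of a finite free module
  obtain ⟨n, p, hp⟩ := Module.Finite.exists_fin' (A ⧸ I) Mbar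
  obtain ⟨s, hs⟩ := Module.projective_lifting_property p LinearMap.id hp
  have hps : ∀ y, p (s y) = y := fun y => DFunLike.congr_fun hs y
  set sp : (Fin n → A ⧸ I) →ₗ[A ⧸ I] (Fin n → A ⧸ I) := s ∘ₗ p with hsp
  have hsp_idem : sp ∘ₗ sp = sp := by
    ext v
    simp [hsp, hps]
  set ebar : Matrix (Fin n) (Fin n) (A ⧸ I) := LinearMap.toMatrix' sp with hebar_def
  have hebar : IsIdempotentElem ebar := by
    rw [IsIdempotentElem, hebar_def, ← LinearMap.toMatrix'_comp, hsp_idem]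
  -- lift the idempotent along the matrix ring surjection
  set F : Matrix (Fin n) (Fin n) A →+* Matrix (Fin n) (Fin n) (A ⧸ I) :=
    (Ideal.Quotient.mk I).mapMatrix with hF_def
  have hFsurj : Function.Surjective F := by
    intro E
    refine ⟨Matrix.of fun i j => (Ideal.Quotient.mk_surjective (E i j)).choose, ?_⟩
    ext i j
    exact (Ideal.Quotient.mk_surjective (E i j)).choose_spec
  have hkernil : ∀ x ∈ RingHom.ker F, IsNilpotent x := by
    intro x hx
    have hxI : ∀ i j, x i j ∈ I := by
      intro i j
      rw [← Ideal.Quotient.eq_zero_iff_mem]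
      have h0 := Matrix.ext_iff.mpr (RingHom.mem_ker.mp hx) i j
      simpa [hF_def, RingHom.mapMatrix_apply, Matrix.map_apply] using h0
    refine ⟨2, ?_⟩
    ext i j
    rw [pow_two, Matrix.mul_apply, Matrix.zero_apply]
    refine Finset.sum_eq_zero fun k _ => ?_
    have hmem : x i k * x k j ∈ I ^ 2 := by
      rw [pow_two]; exact Ideal.mul_mem_mul (hxI i k) (hxI k j)
    rw [hI] at hmem
    exact hmem
  obtain ⟨eA, heA, heAF⟩ := exists_isIdempotentElem_eq_of_ker_isNilpotent F hkernil ebar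
    (RingHom.mem_range.mpr (hFsurj ebar)) hebar
  -- the deformed module
  set fA : (Fin n → A) →ₗ[A] (Fin n → A) := Matrix.toLin' eA with hfA_def
  have hfA_idem : ∀ v, fA (fA v) = fA v := by
    intro v
    have : fA ∘ₗ fA = fA := by
      rw [hfA_def, ← Matrix.toLin'_mul, heA.eq]
    exact DFunLike.congr_fun this v
  set N : Submodule A (Fin n → A) := LinearMap.range fA with hN_def
  have hN : ∀ x ∈ N, fA x = x := by
    rintro _ ⟨y, rfl⟩; exact hfA_idem y
  haveI hfin : Module.Finite A N := Module.Finite.range fA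
  have hproj : Module.Projective A N := by
    refine Module.Projective.of_split N.subtype fA.rangeRestrict ?_
    apply LinearMap.ext
    rintro ⟨x, hx⟩
    apply Subtype.ext
    exact hN x hx
  -- the reduction map
  set q : (Fin n → A) →ₗ[A] (Fin n → A ⧸ I) :=
    LinearMap.pi fun i => (Algebra.linearMap A (A ⧸ I)).comp (LinearMap.proj i) with hq_def
  have hq : ∀ (v : Fin n → A) (i : Fin n), q v i = Ideal.Quotient.mk I (v i) := fun v i => rfl
  have hq_surj : Function.Surjective q := by
    intro w
    refine ⟨fun i => (Ideal.Quotient.mk_surjective (w i)).choose, funext fun i => ?_⟩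
    exact (Ideal.Quotient.mk_surjective (w i)).choose_spec
  have comm : ∀ v : Fin n → A, q (fA v) = sp (q v) := by
    intro v
    funext i
    have h1 : q (fA v) i = Ideal.Quotient.mk I (eA.mulVec v i) := by
      rw [hq, hfA_def, Matrix.toLin'_apply]
    rw [h1, RingHom.map_mulVec]
    have h2 : eA.map (Ideal.Quotient.mk I) = ebar := heAF
    have h3 : (⇑(Ideal.Quotient.mk I) ∘ v) = q v := rfl
    rw [h2, h3]
    have h4 : sp (q v) = ebar.mulVec (q v) := by
      rw [hebar_def, ← Matrix.toLin'_apply, Matrix.toLin'_toMatrix']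
    rw [h4]
  -- the comparison map
  set φ : N →ₗ[A] Mbar := (p.restrictScalars A) ∘ₗ (q ∘ₗ N.subtype) with hφ_def
  have hφ : ∀ x : N, φ x = p (q (x : Fin n → A)) := fun x => rfl
  have hφ_surj : Function.Surjective φ := by
    intro m
    obtain ⟨y, hy⟩ := hq_surj (s m)
    refine ⟨⟨fA y, LinearMap.mem_range_self _ _⟩, ?_⟩
    rw [hφ]
    show p (q (fA y)) = m
    rw [comm, hsp]
    show p (s (p (q y))) = m
    rw [hps, hy, hps]
  have hker : LinearMap.ker φ = I • (⊤ : Submodule A N) := by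
    apply le_antisymm
    · rintro ⟨x, hx⟩ h
      rw [LinearMap.mem_ker, hφ] at h
      have h1 : q x = 0 := by
        have h2 : q x = sp (q x) := by
          conv_lhs => rw [← hN x hx, comm]
        rw [h2, hsp]
        show s (p (q x)) = 0
        rw [h, map_zero]
      have hxI : ∀ i, x i ∈ I := by
        intro i
        have h6 := congrFun h1 i
        rw [hq, Pi.zero_apply, Ideal.Quotient.eq_zero_iff_mem] at h6
        exact h6
      have hx_eq : (⟨x, hx⟩ : N) =
          ∑ i, x i • (⟨fA (Pi.single i 1 : Fin n → A), LinearMap.mem_range_self _ _⟩ : N) := by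
        apply Subtype.ext
        have hsingle : (∑ i, x i • (Pi.single i 1 : Fin n → A)) = x := by
          funext j
          simp [Finset.sum_apply, Pi.single_apply]
        calc (x : Fin n → A) = fA x := (hN x hx).symm
          _ = fA (∑ i, x i • (Pi.single i 1 : Fin n → A)) := by rw [hsingle]
          _ = ∑ i, x i • fA ((Pi.single i 1 : Fin n → A)) := by rw [map_sum]; simp
          _ = ((∑ i, x i • (⟨fA (Pi.single i 1 : Fin n → A), LinearMap.mem_range_self _ _⟩ : N) : N) :
              Fin n → A) := by
            rw [Submodule.coe_sum]
            simp
      rw [hx_eq]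
      exact Submodule.sum_mem _ fun i _ => Submodule.smul_mem_smul (hxI i) trivial
    · rw [Submodule.smul_le]
      intro a ha m _
      rw [LinearMap.mem_ker, map_smul]
      have h5 : a • φ m = Ideal.Quotient.mk I a • φ m := rfl
      rw [h5, Ideal.Quotient.eq_zero_iff_mem.mpr ha, zero_smul]
  refine ⟨ModuleCat.of A N, hfin, hproj, ⟨?_⟩⟩
  exact (Submodule.quotEquivOfEq _ _ hker.symm).trans (φ.quotKerEquivOfSurjective hφ_surj)
end
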